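/- Let θ_1,…,θ_N be linearly independent vectors in a real vector space, let γ, γ' ∈ (0,1), and let θ^γ and θ^{γ'} be the EMA sequences of θ_1,…,θ_N with rates γ and γ' respectively. Fix indices 1 < n_1 < n_2 < n_3 ≤ N and coefficients c_1, c_2, c_3 ∈ (0,1) with c_1 + c_2 + c_3 = 1. If c_1 θ^γ_{n_1} + c_2 θ^γ_{n_2} + c_3 θ^γ_{n_3} = θ^{γ'}_m for some m ∈ {1,…,N}, then necessarily m = n_3. -/

import Mathlib

/-- The EMA sequence of `θ 1, θ 2, …` with rate `γ`:
`θ^γ 1 = θ 1` and `θ^γ n = γ • θ^γ (n−1) + (1−γ) • θ n` for `n ≥ 2`. -/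
noncomputable def emaSeq {V : Type*} [AddCommGroup V] [Module ℝ V]
    (γ : ℝ) (θ : ℕ → V) : ℕ → V
  | 0 => θ 0
  | 1 => θ 1
  | n + 2 => γ • emaSeq γ θ (n + 1) + (1 - γ) • θ (n + 2)

noncomputable def emaCoef (γ : ℝ) (n k : ℕ) : ℝ :=
  if k = 0 ∨ n < k then 0 else if k = 1 then γ ^ (n - 1) else γ ^ (n - k) * (1 - γ)

lemma emaCoef_rec (γ : ℝ) (n k : ℕ) (hn : 1 ≤ n) (hk : 1 ≤ k) :
    emaCoef γ (n + 1) k = γ * emaCoef γ n k + (if k = n + 1 then 1 - γ else 0) := by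
  unfold emaCoef
  rcases eq_or_lt_of_le hk with h1 | h2
  · simp only [← h1]
    have : ¬ (1 = n + 1) := by omega
    simp [this, show ¬ ((1:ℕ) = 0 ∨ n < 1) by omega, show ¬ ((1:ℕ) = 0 ∨ n + 1 < 1) by omega,
      show n + 1 - 1 = (n - 1) + 1 by omega, pow_succ, mul_comm, show n ≠ 0 by omega]
  · have hk2 : 2 ≤ k := h2
    by_cases hkn : k ≤ n
    · have : ¬ (k = n + 1) := by omega
      simp [this, show ¬ (k = 0 ∨ n < k) by omega, show ¬ (k = 0 ∨ n + 1 < k) by omega,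
        show k ≠ 1 by omega, show n + 1 - k = (n - k) + 1 by omega, pow_succ]
      ring
    · by_cases hkn1 : k = n + 1
      · simp [hkn1, show (n:ℕ) < n + 1 by omega, show ¬ ((n+1:ℕ) = 0 ∨ n + 1 < n + 1) by omega,
          show n + 1 ≠ 1 by omega, show n ≠ 0 by omega]
      · simp [show (k = 0 ∨ n < k) by omega, show (k = 0 ∨ n + 1 < k) by omega, hkn1]

lemma ema_repr {V : Type*} [AddCommGroup V] [Module ℝ V]
    (γ : ℝ) (θ : ℕ → V) (N : ℕ) :
    ∀ n, 1 ≤ n → n ≤ N →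
      emaSeq γ θ n = ∑ i : Fin N, emaCoef γ n (i.1 + 1) • θ (i.1 + 1) := by
  intro n
  induction n with
  | zero => omega
  | succ n ih =>
    intro _ hN
    rcases Nat.eq_zero_or_pos n with hn0 | hn1
    · subst hn0
      have hN1 : 0 < N := by omega
      rw [show emaSeq γ θ 1 = θ 1 from rfl]
      rw [Finset.sum_eq_single (⟨0, hN1⟩ : Fin N)]
      · simp [emaCoef]
      · intro b _ hb
        have hb' : b.1 ≠ 0 := fun h => hb (Fin.ext h)
        simp [emaCoef, show (b.1 + 1 = 0 ∨ 1 < b.1 + 1) from Or.inr (by omega), hb']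
      · intro h; exact absurd (Finset.mem_univ _) h
    · obtain ⟨p, rfl⟩ : ∃ p, n = p + 1 := ⟨n - 1, by omega⟩
      rw [show emaSeq γ θ (p + 1 + 1) = γ • emaSeq γ θ (p + 1) + (1 - γ) • θ (p + 2) from rfl]
      rw [ih (by omega) (by omega), Finset.smul_sum]
      have hsingle : (1 - γ) • θ (p + 2)
          = ∑ i : Fin N, (if i.1 + 1 = p + 2 then 1 - γ else 0) • θ (i.1 + 1) := by
        rw [Finset.sum_eq_single (⟨p + 1, by omega⟩ : Fin N)]
        · simp
        · intro b _ hb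
          have hb' : b.1 ≠ p + 1 := fun h => hb (Fin.ext h)
          have : b.1 + 1 ≠ p + 2 := by omega
          simp [this, hb']
        · intro h; exact absurd (Finset.mem_univ _) h
      rw [hsingle, ← Finset.sum_add_distrib]
      refine Finset.sum_congr rfl fun i _ => ?_
      rw [emaCoef_rec γ (p + 1) (i.1 + 1) (by omega) (by omega), add_smul, mul_smul]

lemma emaCoef_zero_of_lt (γ : ℝ) {n k : ℕ} (h : n < k) : emaCoef γ n k = 0 := by
  simp [emaCoef, Or.inr h]

lemma emaCoef_self_pos {γ : ℝ} (hγ : γ ∈ Set.Ioo (0:ℝ) 1) {n : ℕ} (hn : 1 ≤ n) :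
    0 < emaCoef γ n n := by
  rcases eq_or_lt_of_le hn with h1 | h2
  · simp [emaCoef, ← h1]
  · have : n ≠ 1 := by omega
    simp [emaCoef, show ¬ (n = 0 ∨ n < n) by omega, this, Nat.sub_self, show n ≠ 0 by omega]
    linarith [hγ.2]

/-- If `θ 1, …, θ N` are linearly independent, `γ, γ' ∈ (0,1)`,
`1 < n₁ < n₂ < n₃ ≤ N`, `c₁, c₂, c₃ ∈ (0,1)` with `c₁ + c₂ + c₃ = 1`, and
`c₁ • θ^γ n₁ + c₂ • θ^γ n₂ + c₃ • θ^γ n₃ = θ^γ' m` for some `1 ≤ m ≤ N`,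
then necessarily `m = n₃`. -/
theorem ema_combination_index_eq
    {V : Type*} [AddCommGroup V] [Module ℝ V]
    (N : ℕ) (θ : ℕ → V)
    (hli : LinearIndependent ℝ (fun i : Fin N => θ (i.1 + 1)))
    {γ γ' : ℝ} (hγ : γ ∈ Set.Ioo (0 : ℝ) 1) (hγ' : γ' ∈ Set.Ioo (0 : ℝ) 1)
    (n₁ n₂ n₃ : ℕ) (h₁ : 1 < n₁) (h₁₂ : n₁ < n₂) (h₂₃ : n₂ < n₃) (h₃N : n₃ ≤ N)
    (c₁ c₂ c₃ : ℝ) (hc₁ : c₁ ∈ Set.Ioo (0 : ℝ) 1) (hc₂ : c₂ ∈ Set.Ioo (0 : ℝ) 1)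
    (hc₃ : c₃ ∈ Set.Ioo (0 : ℝ) 1) (hsum : c₁ + c₂ + c₃ = 1)
    (m : ℕ) (hm1 : 1 ≤ m) (hmN : m ≤ N)
    (heq : c₁ • emaSeq γ θ n₁ + c₂ • emaSeq γ θ n₂ + c₃ • emaSeq γ θ n₃ = emaSeq γ' θ m) :
    m = n₃ := by
  set d : Fin N → ℝ := fun i =>
    c₁ * emaCoef γ n₁ (i.1 + 1) + c₂ * emaCoef γ n₂ (i.1 + 1)
      + c₃ * emaCoef γ n₃ (i.1 + 1) - emaCoef γ' m (i.1 + 1) with hd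
  have hzero : ∀ i : Fin N, d i = 0 := by
    have key : ∑ i : Fin N, d i • θ (i.1 + 1) = 0 := by
      rw [ema_repr γ θ N n₁ (by omega) (by omega), ema_repr γ θ N n₂ (by omega) (by omega),
        ema_repr γ θ N n₃ (by omega) (by omega), ema_repr γ' θ N m hm1 hmN] at heq
      simp only [hd, sub_smul, add_smul, mul_smul, Finset.sum_sub_distrib,
        Finset.sum_add_distrib, ← Finset.smul_sum]
      rw [sub_eq_zero]
      exact heq
    exact Fintype.linearIndependent_iff.mp hli d key
  have hmle : m ≤ n₃ := by
    by_contra hlt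
    push_neg at hlt
    have h0 := hzero ⟨m - 1, by omega⟩
    simp only [hd] at h0
    rw [show m - 1 + 1 = m by omega] at h0
    rw [emaCoef_zero_of_lt γ (show n₁ < m by omega),
      emaCoef_zero_of_lt γ (show n₂ < m by omega),
      emaCoef_zero_of_lt γ (show n₃ < m by omega)] at h0
    have := emaCoef_self_pos hγ' hm1
    simp at h0
    linarith
  have hnle : n₃ ≤ m := by
    by_contra hlt
    push_neg at hlt
    have h0 := hzero ⟨n₃ - 1, by omega⟩
    simp only [hd] at h0
    rw [show n₃ - 1 + 1 = n₃ by omega] at h0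
    rw [emaCoef_zero_of_lt γ (show n₁ < n₃ by omega),
      emaCoef_zero_of_lt γ (show n₂ < n₃ by omega),
      emaCoef_zero_of_lt γ' (show m < n₃ by omega)] at h0
    have := emaCoef_self_pos hγ (show 1 ≤ n₃ by omega)
    have hc3 := hc₃.1
    nlinarith
  omega
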